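/- arXiv:2501.02466 — 2 statements merged into one kernel-verified Lean document; each statement's English description precedes it below -/
import Mathlib

section
/- A two-sided ideal I of a ring A is idempotent (I = I²) if and only if there exists a projective left A-module P with I = tr(P). -/
set_option linter.unusedVariables false
set_option maxHeartbeats 1000000

/-- The trace ideal of a module `P`: the sum of the images of all `A`-linear maps `P → A`. -/
def traceIdeal (A : Type) [Ring A] (P : Type) [AddCommGroup P] [Module A P] : Ideal A :=
  ⨆ f : P →ₗ[A] A, LinearMap.range f

namespace TraceProofAux

variable {A : Type} [Ring A]

/-- Product of two left ideals. -/
def imul (K L : Ideal A) : Ideal A :=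
  Submodule.span A {x : A | ∃ a ∈ K, ∃ b ∈ L, x = a * b}

theorem mul_mem_imul {K L : Ideal A} {a b : A} (ha : a ∈ K) (hb : b ∈ L) :
    a * b ∈ imul K L :=
  Submodule.subset_span ⟨a, ha, b, hb, rfl⟩

theorem imul_le {K L M : Ideal A} (h : ∀ a ∈ K, ∀ b ∈ L, a * b ∈ M) :
    imul K L ≤ M := by
  rw [imul, Submodule.span_le]
  rintro x ⟨a, ha, b, hb, rfl⟩
  exact h a ha b hb

theorem imul_mono {K K' L L' : Ideal A} (h1 : K ≤ K') (h2 : L ≤ L') :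
    imul K L ≤ imul K' L' :=
  imul_le fun a ha b hb => mul_mem_imul (h1 ha) (h2 hb)

theorem imul_le_right {K L : Ideal A} : imul K L ≤ L :=
  imul_le fun a _ b hb => by simpa [smul_eq_mul] using L.smul_mem a hb

theorem imul_le_left {K L : Ideal A} (hK : ∀ x ∈ K, ∀ r : A, x * r ∈ K) :
    imul K L ≤ K :=
  imul_le fun a ha b _ => hK a ha b

theorem imul_sup_le {K L M : Ideal A} :
    imul K (L ⊔ M) ≤ imul K L ⊔ imul K M :=
  imul_le fun a ha b hb => by
    obtain ⟨l, hl, m, hm, rfl⟩ := Submodule.mem_sup.1 hb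
    rw [mul_add]
    exact add_mem (Submodule.mem_sup_left (mul_mem_imul ha hl))
      (Submodule.mem_sup_right (mul_mem_imul ha hm))

theorem sup_imul_le {K L M : Ideal A} :
    imul (K ⊔ L) M ≤ imul K M ⊔ imul L M :=
  imul_le fun a ha b hb => by
    obtain ⟨k, hk, l, hl, rfl⟩ := Submodule.mem_sup.1 ha
    rw [add_mul]
    exact add_mem (Submodule.mem_sup_left (mul_mem_imul hk hb))
      (Submodule.mem_sup_right (mul_mem_imul hl hb))

theorem imul_assoc {K L M : Ideal A} (hK : ∀ x ∈ K, ∀ r : A, x * r ∈ K) :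
    imul (imul K L) M = imul K (imul L M) := by
  refine le_antisymm (imul_le fun c hc m hm => ?_) (imul_le fun k hk c hc => ?_)
  · -- c * m ∈ imul K (imul L M)
    have : imul K L ≤ Submodule.comap (LinearMap.toSpanSingleton A A m)
        (imul K (imul L M)) := by
      refine imul_le fun a ha b hb => ?_
      simp only [Submodule.mem_comap, LinearMap.toSpanSingleton_apply, smul_eq_mul]
      rw [mul_assoc]
      exact mul_mem_imul ha (mul_mem_imul hb hm)
    simpa [smul_eq_mul] using this hc
  · -- k * c ∈ imul (imul K L) M
    revert k
    induction hc using Submodule.span_induction with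
    | mem y hy =>
      obtain ⟨l, hl, m, hm, rfl⟩ := hy
      intro k hk
      rw [← mul_assoc]
      exact mul_mem_imul (mul_mem_imul hk hl) hm
    | zero => intro k _; simpa using (imul (imul K L) M).zero_mem
    | add a b _ _ iha ihb =>
      intro k hk
      rw [mul_add]
      exact add_mem (iha k hk) (ihb k hk)
    | smul a x _ ih =>
      intro k hk
      rw [smul_eq_mul, ← mul_assoc]
      exact ih (k * a) (hK k hk a)


/-- The Jacobson radical as a left ideal. -/
def Jrad (A : Type) [Ring A] : Ideal A := Ideal.jacobson (⊥ : Ideal A)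

theorem Jrad_mul_right {x : A} (hx : x ∈ Jrad A) (r : A) : x * r ∈ Jrad A :=
  Ideal.mul_mem_right (I := Ideal.jacobson (⊥ : Ideal A)) r hx

/-- Left-invertibility of `1 - j` for `j` in the Jacobson radical. -/
theorem exists_left_inv {j : A} (hj : j ∈ Jrad A) : ∃ z : A, z * (1 - j) = 1 := by
  obtain ⟨z, hz⟩ := Ideal.mem_jacobson_iff.1 hj (-1)
  rw [Ideal.mem_bot, sub_eq_zero] at hz
  refine ⟨z, ?_⟩
  have : z * -1 * j + z = z * (1 - j) := by noncomm_ring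
  rw [← this, hz]

/-- Powers of the Jacobson radical: `Jpow A n` is `J^(n+1)`. -/
def Jpow (A : Type) [Ring A] : ℕ → Ideal A
  | 0 => Jrad A
  | n + 1 => imul (Jrad A) (Jpow A n)

theorem Jpow_succ_le (n : ℕ) : Jpow A (n + 1) ≤ Jpow A n := imul_le_right

theorem Jpow_le_jrad : ∀ n, Jpow A n ≤ Jrad A
  | 0 => le_rfl
  | n + 1 => (Jpow_succ_le n).trans (Jpow_le_jrad n)

theorem Jpow_mul_right : ∀ n, ∀ x ∈ Jpow A n, ∀ r : A, x * r ∈ Jpow A n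
  | 0 => fun x hx r => Jrad_mul_right hx r
  | n + 1 => fun x hx r => by
    have : Jpow A (n + 1) ≤ Submodule.comap (LinearMap.toSpanSingleton A A r)
        (Jpow A (n + 1)) := by
      refine imul_le fun a ha b hb => ?_
      simp only [Submodule.mem_comap, LinearMap.toSpanSingleton_apply, smul_eq_mul]
      rw [mul_assoc]
      exact mul_mem_imul ha (Jpow_mul_right n b hb r)
    simpa [smul_eq_mul] using this hx

theorem pow_mem_Jpow {x : A} (hx : x ∈ Jrad A) : ∀ k, x ^ (k + 1) ∈ Jpow A k
  | 0 => by simpa [Jpow] using hx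
  | k + 1 => by
    rw [pow_succ']
    exact mul_mem_imul hx (pow_mem_Jpow hx k)

theorem exists_Jpow_eq_bot [IsArtinian A A] : ∃ n, Jpow A n = ⊥ := by
  obtain ⟨n, hn⟩ := IsArtinian.monotone_stabilizes
    (⟨fun n => OrderDual.toDual (Jpow A n),
      fun a b hab =>
        (antitone_nat_of_succ_le (fun k => Jpow_succ_le (A := A) k) hab :
          Jpow A b ≤ Jpow A a)⟩ : ℕ →o (Ideal A)ᵒᵈ)
  set N := Jpow A n with hN
  have hJN : imul (Jrad A) N = N :=
    (congrArg OrderDual.ofDual (hn (n + 1) (Nat.le_succ n))).symm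
  have hNr : ∀ x ∈ N, ∀ r : A, x * r ∈ N := Jpow_mul_right n
  have hNN : imul N N = N := by
    have key : ∀ k, imul (Jpow A k) N = N := by
      intro k
      induction k with
      | zero => exact hJN
      | succ k ih =>
        show imul (imul (Jrad A) (Jpow A k)) N = N
        rw [imul_assoc (fun x hx r => Jrad_mul_right hx r), ih, hJN]
    exact key n
  refine ⟨n, ?_⟩
  by_contra hbot
  obtain ⟨L, hLS, hLmin⟩ := IsArtinian.set_has_minimal
    {L : Ideal A | imul N L ≠ ⊥}
    ⟨⊤, by
      intro h
      refine hbot (eq_bot_iff.2 fun x hx => ?_)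
      have : x * 1 ∈ imul N ⊤ := mul_mem_imul hx trivial
      rw [h] at this
      simpa using this⟩
  have h1 : imul N L ≤ L := imul_le_right
  have h2 : imul N (imul N L) = imul N L := by
    rw [← imul_assoc hNr, hNN]
  have h3 : imul N L = L := by
    by_contra hne
    exact hLmin (imul N L) (by rw [Set.mem_setOf_eq, h2]; exact hLS) (lt_of_le_of_ne h1 hne)
  have hx : ∃ x ∈ L, ∃ n₀ ∈ N, n₀ * x ≠ 0 := by
    by_contra hc
    push_neg at hc
    exact hLS (eq_bot_iff.2 (imul_le fun a ha b hb => by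
      rw [Ideal.mem_bot]
      exact hc b hb a ha))
  obtain ⟨x, hxL, n₀, hn₀, hn₀x⟩ := hx
  have hspanS : Submodule.span A {x} ∈ {L : Ideal A | imul N L ≠ ⊥} := by
    intro h
    have : n₀ * x ∈ imul N (Submodule.span A {x}) :=
      mul_mem_imul hn₀ (Submodule.mem_span_singleton_self x)
    rw [h] at this
    exact hn₀x (by simpa using this)
  have hspan_le : Submodule.span A {x} ≤ L := by
    rw [Submodule.span_le, Set.singleton_subset_iff]; exact hxL
  have hspan_eq : Submodule.span A {x} = L := by
    by_contra hne
    exact hLmin _ hspanS (lt_of_le_of_ne hspan_le hne)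
  -- x ∈ N * x
  have hxNx : x ∈ Submodule.map (LinearMap.toSpanSingleton A A x) N := by
    have : imul N (Submodule.span A {x}) ≤
        Submodule.map (LinearMap.toSpanSingleton A A x) N := by
      refine imul_le fun a ha b hb => ?_
      obtain ⟨c, rfl⟩ := Submodule.mem_span_singleton.1 hb
      exact ⟨a * c, hNr a ha c, by simp [smul_eq_mul, mul_assoc]⟩
    exact this (by rw [hspan_eq, h3]; exact hxL)
  obtain ⟨m, hmN, hmx⟩ := hxNx
  simp only [LinearMap.toSpanSingleton_apply, smul_eq_mul] at hmx
  obtain ⟨z, hz⟩ := exists_left_inv (Jpow_le_jrad n hmN)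
  have : x = 0 := by
    calc x = 1 * x := (one_mul x).symm
    _ = z * (1 - m) * x := by rw [hz]
    _ = z * (x - m * x) := by noncomm_ring
    _ = 0 := by rw [hmx, sub_self, mul_zero]
  exact hn₀x (by rw [this, mul_zero])


/-- In an Artinian ring, any left ideal containing the radical has a complement modulo the
radical. -/
theorem exists_compl [IsArtinian A A] (T : Ideal A) (hT : Jrad A ≤ T) :
    ∃ C : Ideal A, Jrad A ≤ C ∧ T ⊔ C = ⊤ ∧ T ⊓ C = Jrad A := by
  obtain ⟨C, hCS, hCmin⟩ := IsArtinian.set_has_minimal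
    {C : Ideal A | Jrad A ≤ C ∧ T ⊔ C = ⊤} ⟨⊤, le_top, by simp⟩
  obtain ⟨hJC, hTC⟩ := hCS
  refine ⟨C, hJC, hTC, ?_⟩
  refine le_antisymm ?_ (le_inf hT hJC)
  by_contra hnle
  obtain ⟨x, hxTC, hxJ⟩ := SetLike.not_le_iff_exists.1 hnle
  -- find a maximal left ideal m not containing x
  have : ∃ m : Ideal A, m.IsMaximal ∧ x ∉ m := by
    by_contra hc
    push_neg at hc
    exact hxJ (Submodule.mem_sInf.2 fun m ⟨_, hm⟩ => hc m hm)
  obtain ⟨m, hm, hxm⟩ := this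
  have hJm : Jrad A ≤ m := sInf_le ⟨bot_le, hm⟩
  set L' : Ideal A := T ⊓ C with hL'
  have hL'm : ¬ L' ≤ m := fun h => hxm (h hxTC)
  have hsup : L' ⊔ m = ⊤ := by
    refine (Ideal.isMaximal_def.mp hm).2 (L' ⊔ m) (lt_of_le_of_ne le_sup_right ?_)
    intro h
    exact hL'm (le_trans le_sup_left (le_of_eq h.symm))
  have hmodular : L' ⊔ (m ⊓ C) = C := by
    rw [← sup_inf_assoc_of_le m (inf_le_right : L' ≤ C), hsup, top_inf_eq]
  have hC'S : (C ⊓ m : Ideal A) ∈ {C : Ideal A | Jrad A ≤ C ∧ T ⊔ C = ⊤} := by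
    refine ⟨le_inf hJC hJm, ?_⟩
    have h4 : T ⊔ (L' ⊔ m ⊓ C) = ⊤ := by rw [hmodular, hTC]
    rw [← sup_assoc, sup_eq_left.2 (inf_le_left : L' ≤ T)] at h4
    rw [inf_comm C m]
    exact h4
  have hC'lt : (C ⊓ m : Ideal A) < C := by
    refine lt_of_le_of_ne inf_le_left ?_
    intro h
    exact hL'm (le_trans inf_le_right (le_trans (le_of_eq h.symm) inf_le_right))
  exact hCmin _ hC'S hC'lt


theorem mem_jacobson_twoSided_iff (x : A) :
    x ∈ TwoSidedIdeal.jacobson (⊥ : TwoSidedIdeal A) ↔ x ∈ Jrad A := by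
  rw [← TwoSidedIdeal.mem_asIdeal, TwoSidedIdeal.asIdeal_jacobson]
  have : TwoSidedIdeal.asIdeal (⊥ : TwoSidedIdeal A) = (⊥ : Ideal A) := by
    ext y
    simp [TwoSidedIdeal.mem_asIdeal]
  rw [this]
  rfl

/-- Key structure theorem: an idempotent two-sided ideal in a left Artinian ring is the
two-sided ideal generated by an idempotent element. -/
theorem exists_idem [IsArtinian A A] (I : Ideal A) (hIr : ∀ x ∈ I, ∀ r : A, x * r ∈ I)
    (hII : imul I I = I) :
    ∃ e : A, IsIdempotentElem e ∧ I = Submodule.span A (Set.range fun b => e * b) := by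
  obtain ⟨nn, hnn⟩ := exists_Jpow_eq_bot (A := A)
  set T : Ideal A := I ⊔ Jrad A with hTdef
  have hTr : ∀ x ∈ T, ∀ r : A, x * r ∈ T := by
    intro x hx r
    obtain ⟨i, hi, j, hj, rfl⟩ := Submodule.mem_sup.1 hx
    rw [add_mul]
    exact add_mem (Submodule.mem_sup_left (hIr i hi r))
      (Submodule.mem_sup_right (Jrad_mul_right hj r))
  obtain ⟨C, hJC, hTC, hTCinf⟩ := exists_compl T le_sup_right
  obtain ⟨f, hfT, c, hcC, hfc⟩ := Submodule.mem_sup.1 (hTC ▸ Submodule.mem_top : (1:A) ∈ T ⊔ C)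
  have hmodf : ∀ x ∈ T, x - x * f ∈ Jrad A := by
    intro x hx
    have h5 : x * f + x * c = x := by rw [← mul_add, hfc, mul_one]
    have h6 : x - x * f = x * c :=
      sub_eq_iff_eq_add.mpr (h5.symm.trans (add_comm (x * f) (x * c)))
    rw [h6, ← hTCinf]
    refine Submodule.mem_inf.2 ⟨hTr x hx c, ?_⟩
    simpa [smul_eq_mul] using C.smul_mem x hcC
  set Jt := TwoSidedIdeal.jacobson (⊥ : TwoSidedIdeal A) with hJtdef
  set π := Jt.ringCon.mk' with hπdef
  have hkermem : ∀ x : A, x ∈ RingHom.ker π → x ∈ Jrad A := by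
    intro x hx
    rw [RingHom.mem_ker] at hx
    rw [← mem_jacobson_twoSided_iff, TwoSidedIdeal.mem_iff]
    have : (x : Jt.ringCon.Quotient) = ((0 : A) : Jt.ringCon.Quotient) := by exact_mod_cast hx
    exact Jt.ringCon.eq.mp this
  have hmemker : ∀ x : A, x ∈ Jrad A → x ∈ RingHom.ker π := by
    intro x hx
    rw [RingHom.mem_ker]
    have := Jt.ringCon.eq.mpr
      ((TwoSidedIdeal.mem_iff Jt x).mp ((mem_jacobson_twoSided_iff x).mpr hx))
    exact_mod_cast this
  have hker : ∀ x ∈ RingHom.ker π, IsNilpotent x := by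
    intro x hx
    refine ⟨nn + 1, ?_⟩
    have := pow_mem_Jpow (hkermem x hx) nn
    rw [hnn] at this
    simpa using this
  have hf2 : f - f * f ∈ Jrad A := hmodf f hfT
  have hπf : IsIdempotentElem (π f) := by
    have h7 : π (f - f * f) = 0 := hmemker _ hf2
    rw [map_sub, sub_eq_zero] at h7
    unfold IsIdempotentElem
    rw [← map_mul, ← h7]
  obtain ⟨e, he, hef⟩ :=
    exists_isIdempotentElem_eq_of_ker_isNilpotent (f := π) hker (π f) ⟨f, rfl⟩ hπf
  have hefJ : e - f ∈ Jrad A := by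
    refine hkermem _ ?_
    rw [RingHom.mem_ker, map_sub, hef, sub_self]
  set K : Ideal A := Submodule.span A (Set.range fun b => e * b) with hKdef
  have heK : e ∈ K := Submodule.subset_span ⟨1, mul_one e⟩
  have hbK : ∀ b : A, e * b ∈ K := fun b => Submodule.subset_span ⟨b, rfl⟩
  have hKr : ∀ x ∈ K, ∀ r : A, x * r ∈ K := by
    intro x hx r
    have : K ≤ Submodule.comap (LinearMap.toSpanSingleton A A r) K := by
      rw [hKdef, Submodule.span_le]
      rintro _ ⟨b, rfl⟩
      simp only [SetLike.mem_coe, Submodule.mem_comap, LinearMap.toSpanSingleton_apply,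
        smul_eq_mul]
      rw [mul_assoc]
      exact hbK (b * r)
    simpa [smul_eq_mul] using this hx
  have hKK : K ≤ imul K K := by
    rw [hKdef, Submodule.span_le]
    rintro _ ⟨b, rfl⟩
    show e * b ∈ (imul K K : Set A)
    have h8 : e * b = e * (e * b) := by rw [← mul_assoc, he]
    rw [h8]
    exact mul_mem_imul heK (hbK b)
  have hKT : K ≤ T := by
    rw [hKdef, Submodule.span_le]
    rintro _ ⟨b, rfl⟩
    show e * b ∈ (T : Set A)
    have h9 : e * b = f * b + (e - f) * b := by noncomm_ring
    rw [h9]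
    exact add_mem (hTr f hfT b) (le_sup_right (a := I) (Jrad_mul_right hefJ b))
  have hTK : T ≤ K ⊔ Jrad A := by
    intro x hx
    have h1 : x - x * f ∈ Jrad A := hmodf x hx
    have h2 : x * (f - e) ∈ Jrad A := by
      have h10 : f - e ∈ Jrad A := by
        have := (Jrad A).neg_mem hefJ
        rwa [neg_sub] at this
      simpa [smul_eq_mul] using (Jrad A).smul_mem x h10
    have h3 : x * e ∈ K := by simpa [smul_eq_mul] using K.smul_mem x heK
    have h11 : x = x * e + (x * (f - e) + (x - x * f)) := by noncomm_ring
    rw [h11]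
    exact add_mem (Submodule.mem_sup_left h3) (Submodule.mem_sup_right (add_mem h2 h1))
  have hIK : ∀ m : ℕ, I ≤ K ⊔ Jpow A m := by
    intro m
    induction m with
    | zero =>
      show I ≤ K ⊔ Jrad A
      exact le_sup_left.trans hTK
    | succ m ih =>
      calc I = imul I I := hII.symm
        _ ≤ imul I (K ⊔ Jpow A m) := imul_mono le_rfl ih
        _ ≤ imul I K ⊔ imul I (Jpow A m) := imul_sup_le
        _ ≤ K ⊔ (imul K (Jpow A m) ⊔ imul (Jrad A) (Jpow A m)) := by
            refine sup_le_sup imul_le_right ?_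
            exact le_trans (imul_mono (le_sup_left.trans hTK) le_rfl) sup_imul_le
        _ ≤ K ⊔ Jpow A (m + 1) := by
            have hJp : imul (Jrad A) (Jpow A m) = Jpow A (m + 1) := rfl
            exact sup_le le_sup_left
              (sup_le ((imul_le_left hKr).trans le_sup_left) (hJp ▸ le_sup_right))
  have hKI : ∀ m : ℕ, K ≤ I ⊔ Jpow A m := by
    intro m
    induction m with
    | zero =>
      show K ≤ I ⊔ Jrad A
      exact hKT
    | succ m ih =>
      calc K ≤ imul K K := hKK
        _ ≤ imul K (I ⊔ Jpow A m) := imul_mono le_rfl ih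
        _ ≤ imul K I ⊔ imul K (Jpow A m) := imul_sup_le
        _ ≤ I ⊔ (imul I (Jpow A m) ⊔ imul (Jrad A) (Jpow A m)) := by
            refine sup_le_sup imul_le_right ?_
            exact le_trans (imul_mono hKT le_rfl) sup_imul_le
        _ ≤ I ⊔ Jpow A (m + 1) := by
            have hJp : imul (Jrad A) (Jpow A m) = Jpow A (m + 1) := rfl
            exact sup_le le_sup_left
              (sup_le ((imul_le_left hIr).trans le_sup_left) (hJp ▸ le_sup_right))
  refine ⟨e, he, le_antisymm ?_ ?_⟩
  · have := hIK nn
    rw [hnn, sup_bot_eq] at this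
    exact this
  · have := hKI nn
    rw [hnn, sup_bot_eq] at this
    exact this


/-- The left ideal `Ae` is a projective `A`-module. -/
theorem projective_span_idem (e : A) (he : IsIdempotentElem e) :
    Module.Projective A ↥(Submodule.span A ({e} : Set A)) := by
  refine Module.Projective.of_split (R := A) (M := A) (Submodule.subtype _)
    (LinearMap.codRestrict _ (LinearMap.toSpanSingleton A A e)
      (fun x => Submodule.smul_mem _ x (Submodule.mem_span_singleton_self e))) ?_
  ext p
  obtain ⟨a, ha⟩ := Submodule.mem_span_singleton.1 p.2
  simp only [LinearMap.coe_comp, Function.comp_apply, Submodule.coe_subtype,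
    LinearMap.codRestrict_apply, LinearMap.toSpanSingleton_apply, LinearMap.id_coe, id_eq]
  rw [← ha]
  simp only [smul_eq_mul, mul_assoc, he.eq]
  show a * e * e = a * e
  rw [mul_assoc, he.eq]

theorem trace_span_idem (e : A) (he : IsIdempotentElem e) :
    traceIdeal A ↥(Submodule.span A ({e} : Set A))
      = Submodule.span A (Set.range fun b => e * b) := by
  set ep : ↥(Submodule.span A ({e} : Set A)) := ⟨e, Submodule.mem_span_singleton_self e⟩
  apply le_antisymm
  · refine iSup_le fun f => ?_
    rintro _ ⟨p, rfl⟩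
    obtain ⟨a, ha⟩ := Submodule.mem_span_singleton.1 p.2
    have hpe : p = a • ep := by
      apply Subtype.ext
      simpa using ha.symm
    have hee : ep = e • ep := by
      apply Subtype.ext
      show e = e • e
      rw [smul_eq_mul, he.eq]
    have hfe : f ep = e * f ep := by
      conv_lhs => rw [hee]
      rw [map_smul, smul_eq_mul]
    rw [hpe, map_smul, smul_eq_mul, hfe]
    exact Submodule.smul_mem _ a (Submodule.subset_span ⟨f ep, rfl⟩)
  · rw [Submodule.span_le]
    rintro _ ⟨b, rfl⟩
    let g : ↥(Submodule.span A ({e} : Set A)) →ₗ[A] A :=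
      (LinearMap.toSpanSingleton A A b).comp (Submodule.subtype _)
    show e * b ∈ (traceIdeal A ↥(Submodule.span A ({e} : Set A)) : Set A)
    have hg : e * b = g ep := by
      simp [g, smul_eq_mul]
      rfl
    rw [hg]
    exact le_iSup (fun f : ↥(Submodule.span A ({e} : Set A)) →ₗ[A] A => LinearMap.range f) g
      ⟨ep, rfl⟩

/-- The trace ideal of a projective module is idempotent: every element is a sum of products
of elements of the trace ideal. -/
theorem trace_le_span_sq {P : Type} [AddCommGroup P] [Module A P]
    (hproj : Module.Projective A P) :
    traceIdeal A P ≤ Submodule.span A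
      {x : A | ∃ a ∈ traceIdeal A P, ∃ b ∈ traceIdeal A P, x = a * b} := by
  obtain ⟨s, hs⟩ := Module.projective_def.mp hproj
  refine iSup_le fun f => ?_
  rintro _ ⟨p, rfl⟩
  have h1 : f p = (s p).sum fun x a => a • f x := by
    conv_lhs => rw [← hs p]
    simp only [Finsupp.linearCombination_apply, Finsupp.sum, map_sum, map_smul, id_eq]
  show f p ∈ Submodule.span A
      {x : A | ∃ a ∈ traceIdeal A P, ∃ b ∈ traceIdeal A P, x = a * b}
  rw [h1]
  refine Submodule.sum_mem
    (Submodule.span A {x : A | ∃ a ∈ traceIdeal A P, ∃ b ∈ traceIdeal A P, x = a * b})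
    fun x hx => ?_
  have hax : (s p) x ∈ traceIdeal A P := by
    refine le_iSup (fun f : P →ₗ[A] A => LinearMap.range f) ((Finsupp.lapply x).comp s) ?_
    exact ⟨p, rfl⟩
  have hfx : f x ∈ traceIdeal A P :=
    le_iSup (fun f : P →ₗ[A] A => LinearMap.range f) f ⟨x, rfl⟩
  show ((s p) x) • f x ∈ Submodule.span A
      {x : A | ∃ a ∈ traceIdeal A P, ∃ b ∈ traceIdeal A P, x = a * b}
  rw [smul_eq_mul]
  exact Submodule.subset_span ⟨(s p) x, hax, f x, hfx, rfl⟩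


end TraceProofAux

/-- A two-sided ideal `I` of a ring `A` (here an artin algebra, i.e. an
Artinian ring which is a finite algebra over a commutative Artinian ring) is idempotent,
`I = I²`, if and only if there is a projective left `A`-module `P` with `I = tr(P)`. -/
theorem idempotent_iff_trace_of_projective
    (R A : Type) [CommRing R] [IsArtinianRing R] [Ring A] [Algebra R A] [Module.Finite R A]
    (I : TwoSidedIdeal A) :
    I.asIdeal = Submodule.span A {x : A | ∃ a ∈ I, ∃ b ∈ I, x = a * b} ↔
      ∃ (P : Type) (_ : AddCommGroup P) (_ : Module A P),
        Module.Projective A P ∧ I.asIdeal = traceIdeal A P := by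
  constructor
  · intro hI
    haveI hart1 : IsArtinian R A := inferInstance
    haveI hart : IsArtinian A A := isArtinian_of_tower R hart1
    have hset : {x : A | ∃ a ∈ I, ∃ b ∈ I, x = a * b}
        = {x : A | ∃ a ∈ I.asIdeal, ∃ b ∈ I.asIdeal, x = a * b} := by
      ext x
      simp [TwoSidedIdeal.mem_asIdeal]
    have hII : TraceProofAux.imul I.asIdeal I.asIdeal = I.asIdeal := by
      rw [TraceProofAux.imul, ← hset, ← hI]
    have hIr : ∀ x ∈ I.asIdeal, ∀ r : A, x * r ∈ I.asIdeal := by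
      intro x hx r
      rw [TwoSidedIdeal.mem_asIdeal] at hx ⊢
      exact I.mul_mem_right x r hx
    obtain ⟨e, he, hIe⟩ := TraceProofAux.exists_idem I.asIdeal hIr hII
    refine ⟨↥(Submodule.span A ({e} : Set A)), inferInstance, inferInstance,
      TraceProofAux.projective_span_idem e he, ?_⟩
    rw [TraceProofAux.trace_span_idem e he]
    exact hIe
  · rintro ⟨P, _, _, hproj, hP⟩
    apply le_antisymm
    · have h := TraceProofAux.trace_le_span_sq (A := A) (P := P) hproj
      rw [← hP] at h
      refine h.trans (le_of_eq ?_)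
      congr 1
    · rw [Submodule.span_le]
      rintro x ⟨a, ha, b, hb, rfl⟩
      show a * b ∈ I.asIdeal
      rw [TwoSidedIdeal.mem_asIdeal]
      exact I.mul_mem_right a b ((TwoSidedIdeal.mem_asIdeal (I := I)).mp ha)
end

section
/- For any two-sided ideal I of an artin algebra A, Ext¹_A(A/I, D(A/I)) ≅ D(I/I²), where D is the Matlis duality. In particular, Ext¹_A(A/I, D(A/I)) = 0 if and only if I is idempotent. -/
section Dual

open CategoryTheory

variable (k A : Type) [Field k] [Ring A] [Algebra k A]

/-- Left `A`-module structure on the `k`-dual of `A`, via the right regular action. -/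
noncomputable instance dualModule : Module A (A →ₗ[k] k) where
  smul a f := f.comp (LinearMap.mulRight k a)
  one_smul f := by ext x; show f (x * 1) = f x; rw [mul_one]
  mul_smul a b f := by ext x; show f (x * (a * b)) = f ((x * a) * b); rw [mul_assoc]
  smul_zero a := rfl
  smul_add a f g := rfl
  add_smul a b f := by ext x; show f (x * (a + b)) = f (x * a) + f (x * b); rw [mul_add, map_add]
  zero_smul f := by ext x; show f (x * 0) = 0; rw [mul_zero, map_zero]

/-- The Matlis dual `D(A/I)`, realized as the `A`-submodule of `D(A) = Hom_k(A, k)`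
consisting of the functionals vanishing on `I`. -/
noncomputable def DBar (I : TwoSidedIdeal A) : Submodule A (A →ₗ[k] k) where
  carrier := {f | ∀ x ∈ I, f x = 0}
  add_mem' := fun hf hg x hx => by simp [hf x hx, hg x hx]
  zero_mem' := fun x hx => rfl
  smul_mem' := fun a f hf x hx => hf (x * a) (I.mul_mem_right x a hx)

end Dual

/-- The `n`-th Ext-group `Ext_A^n(M, N)` of left `A`-modules. -/
noncomputable def egrp (A : Type) [Ring A] (n : ℕ) (M N : Type) [AddCommGroup M] [Module A M]
    [AddCommGroup N] [Module A N] : Type :=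
  ((_root_.Ext ℤ (ModuleCat A) n).obj (Opposite.op (ModuleCat.of A M))).obj
    (ModuleCat.of A N)

noncomputable instance (A : Type) [Ring A] (n : ℕ) (M N : Type) [AddCommGroup M] [Module A M]
    [AddCommGroup N] [Module A N] : AddCommGroup (egrp A n M N) :=
  inferInstanceAs (AddCommGroup (((_root_.Ext ℤ (ModuleCat A) n).obj
    (Opposite.op (ModuleCat.of A M))).obj (ModuleCat.of A N)))

/-- `I²` regarded as a submodule of `I`. -/
noncomputable def sqInside (A : Type) [Ring A] (I : TwoSidedIdeal A) :
    Submodule A ↥(I.asIdeal) :=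
  (Submodule.span A {x : A | ∃ a ∈ I, ∃ b ∈ I, x = a * b}).comap (I.asIdeal).subtype


namespace ExtOneProofAux

open CategoryTheory
variable (A : Type) [Ring A] (I : TwoSidedIdeal A)

noncomputable def tw : ℕ → Σ M : ModuleCat.{0} A, Submodule A M
  | 0 => ⟨ModuleCat.of A A, I.asIdeal⟩
  | n + 1 => ⟨ModuleCat.of A (↥(tw n).2 →₀ A),
      LinearMap.ker (Finsupp.linearCombination A (Subtype.val : ↥(tw n).2 → (tw n).1))⟩

noncomputable def dd (n : ℕ) : (tw A I (n + 1)).1 ⟶ (tw A I n).1 :=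
  ModuleCat.ofHom (Finsupp.linearCombination A (Subtype.val : ↥(tw A I n).2 → (tw A I n).1))

lemma ker_dd (n : ℕ) : LinearMap.ker (dd A I n).hom = (tw A I (n + 1)).2 := rfl

lemma range_dd (n : ℕ) : LinearMap.range (dd A I n).hom = (tw A I n).2 := by
  show LinearMap.range (Finsupp.linearCombination A _) = _
  rw [Finsupp.range_linearCombination, Subtype.range_coe, Submodule.span_eq]

noncomputable def cplx : ChainComplex (ModuleCat A) ℕ :=
  ChainComplex.of (fun n => (tw A I n).1) (dd A I) (fun n => by
    apply ModuleCat.hom_ext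
    apply LinearMap.ext
    intro x
    have h1 : dd A I (n + 1) x ∈ LinearMap.range (dd A I (n + 1)).hom := ⟨x, rfl⟩
    rw [range_dd, ← ker_dd] at h1
    exact h1)

lemma cplx_d (n : ℕ) : (cplx A I).d (n + 1) n = dd A I n := ChainComplex.of_d (fun n => (tw A I n).1) (dd A I) n

variable (k : Type) [Field k] [Algebra k A]

/-- The target module. -/
noncomputable abbrev NMod : ModuleCat A := ModuleCat.of A ↥(DBar k A I)

lemma smul_NN (i : A) (hi : i ∈ I) (n : ↥(DBar k A I)) : i • n = 0 := by
  apply Subtype.ext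
  show i • (n : A →ₗ[k] k) = 0
  apply LinearMap.ext
  intro x
  show (n : A →ₗ[k] k) (x * i) = 0
  exact n.2 (x * i) (I.mul_mem_left x i hi)

/-- The Hom cochain complex. -/
noncomputable abbrev KK : CochainComplex (ModuleCat ℤ) ℕ :=
  (cplx A I).linearYonedaObj ℤ (NMod A I k)

/-- Its short complex at degree 1. -/
noncomputable abbrev SS : ShortComplex (ModuleCat ℤ) := (KK A I k).sc' 0 1 2

lemma Sf_app (φ : (cplx A I).X 0 ⟶ NMod A I k) : (SS A I k).f φ = 0 := by
  have φ' : A →ₗ[A] ↥(DBar k A I) := φ.hom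
  show (KK A I k).d 0 1 φ = 0
  rw [ChainComplex.linearYonedaObj_d]
  show (cplx A I).d 1 0 ≫ φ = 0
  apply ModuleCat.hom_ext
  apply LinearMap.ext
  intro z
  show φ.hom ((cplx A I).d 1 0 z) = 0
  have hz : (cplx A I).d 1 0 z ∈ I.asIdeal := by
    have h : (cplx A I).d 1 0 z ∈ LinearMap.range (dd A I 0).hom := by
      rw [← cplx_d]; exact ⟨z, rfl⟩
    rwa [range_dd] at h
  have key : ∀ (a : A), a ∈ I → φ.hom a = 0 := by
    intro a ha
    have h1 : a = a • (1 : A) := by rw [smul_eq_mul, mul_one]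
    have h3 := congrArg φ.hom h1
    erw [map_smul] at h3
    rw [h3]
    exact smul_NN A I k a ha _
  exact key _ (TwoSidedIdeal.mem_asIdeal.1 hz)

lemma Sf_zero : (SS A I k).f = 0 := by
  apply ModuleCat.hom_ext
  apply LinearMap.ext
  intro φ
  exact Sf_app A I k φ

lemma range_toCycles_bot :
    LinearMap.range (SS A I k).moduleCatToCycles = ⊥ := by
  rw [eq_bot_iff]
  rintro y ⟨x, rfl⟩
  show (SS A I k).moduleCatToCycles x ∈ (⊥ : Submodule ℤ _)
  rw [Submodule.mem_bot]
  apply Subtype.ext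
  show (SS A I k).f x = 0
  rw [Sf_zero]
  rfl

lemma mem_kerSg (φ : (cplx A I).X 1 ⟶ NMod A I k) :
    φ ∈ LinearMap.ker (SS A I k).g.hom ↔
      ∀ w ∈ LinearMap.ker (dd A I 0).hom, φ w = 0 := by
  have hg : (SS A I k).g φ = dd A I 1 ≫ φ := by
    have e1 : (SS A I k).g φ = (cplx A I).d 2 1 ≫ φ := by
      show (KK A I k).d 1 2 φ = _
      rw [ChainComplex.linearYonedaObj_d]
      rfl
    rw [e1, cplx_d]
    rfl
  show (SS A I k).g φ = 0 ↔ _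
  constructor
  · intro h w hw
    rw [ker_dd] at hw
    rw [← range_dd A I 1] at hw
    obtain ⟨u, rfl⟩ := hw
    have h0 : dd A I 1 ≫ φ = 0 := hg.symm.trans h
    exact LinearMap.congr_fun (congrArg ModuleCat.Hom.hom h0) u
  · intro h
    refine hg.trans ?_
    apply ModuleCat.hom_ext
    apply LinearMap.ext
    intro u
    show φ (dd A I 1 u) = 0
    apply h
    rw [ker_dd, ← range_dd A I 1]
    exact ⟨u, rfl⟩

/-- `θ : (I →₀ A) →ₗ[A] I`, basis elt `i` to `i`. -/
noncomputable def theta : (↥I.asIdeal →₀ A) →ₗ[A] ↥I.asIdeal :=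
  Finsupp.linearCombination A (fun i => i)

lemma val_theta (w : ↥I.asIdeal →₀ A) : ((theta A I w : ↥I.asIdeal) : A) = dd A I 0 w :=
  Finsupp.apply_linearCombination A (I.asIdeal.subtype) (fun i => i) w

/-- Build `Φ : I →ₗ[A] N` from a cocycle `φ`. -/
noncomputable def toHomI (φ : (cplx A I).X 1 ⟶ NMod A I k)
    (hφ : ∀ w ∈ LinearMap.ker (dd A I 0).hom, φ w = 0) :
    ↥I.asIdeal →ₗ[A] ↥(DBar k A I) where
  toFun i := φ (Finsupp.single i 1)
  map_add' i j := by
    have h := hφ (Finsupp.single (i + j) 1 - Finsupp.single i 1 - Finsupp.single j 1) (by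
      erw [LinearMap.mem_ker, map_sub, map_sub]
      show Finsupp.linearCombination A Subtype.val (Finsupp.single (i+j) 1) -
        Finsupp.linearCombination A Subtype.val (Finsupp.single i 1) -
        Finsupp.linearCombination A Subtype.val (Finsupp.single j 1) = 0
      rw [Finsupp.linearCombination_single, Finsupp.linearCombination_single,
        Finsupp.linearCombination_single, one_smul, one_smul, one_smul]
      show ((i : A) + (j : A)) - (i : A) - (j : A) = 0
      abel)
    erw [map_sub, map_sub, sub_sub, sub_eq_zero] at h
    exact h
  map_smul' a i := by
    have h := hφ (Finsupp.single (a • i) 1 - Finsupp.single i a) (by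
      erw [LinearMap.mem_ker, map_sub]
      show Finsupp.linearCombination A Subtype.val (Finsupp.single (a • i) 1) -
        Finsupp.linearCombination A Subtype.val (Finsupp.single i a) = 0
      rw [Finsupp.linearCombination_single, Finsupp.linearCombination_single, one_smul]
      show (a * (i : A)) - a • (i : A) = 0
      rw [smul_eq_mul, sub_self])
    erw [map_sub, sub_eq_zero] at h
    have h2 : Finsupp.single i a = a • Finsupp.single i (1 : A) := by
      rw [Finsupp.smul_single, smul_eq_mul, mul_one]
    show φ (Finsupp.single (a • i) 1) = a • φ (Finsupp.single i 1)
    erw [h, h2, map_smul]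
    rfl

/-- Build a cocycle from `Φ : I →ₗ[A] N`. -/
noncomputable def fromHomI (Φ : ↥I.asIdeal →ₗ[A] ↥(DBar k A I)) :
    (cplx A I).X 1 ⟶ NMod A I k :=
  ModuleCat.ofHom (Φ.comp (theta A I) : (↥I.asIdeal →₀ A) →ₗ[A] ↥(DBar k A I))

lemma fromHomI_vanish (Φ : ↥I.asIdeal →ₗ[A] ↥(DBar k A I)) :
    ∀ w ∈ LinearMap.ker (dd A I 0).hom, fromHomI A I k Φ w = 0 := by
  intro w hw
  have h1 : theta A I w = 0 := by
    apply Subtype.ext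
    erw [val_theta]
    exact hw
  show Φ (theta A I w) = 0
  rw [h1, map_zero]

lemma fromHomI_toHomI (φ : (cplx A I).X 1 ⟶ NMod A I k)
    (hφ : ∀ w ∈ LinearMap.ker (dd A I 0).hom, φ w = 0) :
    fromHomI A I k (toHomI A I k φ hφ) = φ := by
  apply ModuleCat.hom_ext
  show (fromHomI A I k (toHomI A I k φ hφ)).hom =
    φ.hom
  apply Finsupp.lhom_ext
  intro i b
  have hL : (fromHomI A I k (toHomI A I k φ hφ)).hom
      (Finsupp.single i b) = (toHomI A I k φ hφ) (theta A I (Finsupp.single i b)) := rfl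
  refine hL.trans ?_
  have h1 : theta A I (Finsupp.single i b) = b • i := by
    unfold theta; erw [Finsupp.linearCombination_single]; rfl
  erw [h1, map_smul]
  have h2 : (toHomI A I k φ hφ) i =
      φ.hom (Finsupp.single i 1) := rfl
  rw [h2]
  have h3 : b • Finsupp.single i (1 : A) = Finsupp.single i b := by
    rw [Finsupp.smul_single, smul_eq_mul, mul_one]
  exact ((map_smul φ.hom b
    (Finsupp.single i 1)).symm).trans
    ((congrArg φ.hom h3).trans rfl)

/-- Kernel of `S.g` is `Hom_A(I, N)`. -/
noncomputable def kerEquiv :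
    ↥(LinearMap.ker (SS A I k).g.hom) ≃+ (↥I.asIdeal →ₗ[A] ↥(DBar k A I)) where
  toFun x := toHomI A I k x.1 ((mem_kerSg A I k x.1).1 x.2)
  invFun Φ := ⟨fromHomI A I k Φ, (mem_kerSg A I k _).2 (fromHomI_vanish A I k Φ)⟩
  left_inv x := Subtype.ext
    (fromHomI_toHomI A I k x.1 ((mem_kerSg A I k x.1).1 x.2))
  right_inv Φ := by
    apply LinearMap.ext
    intro i
    show Φ (theta A I (Finsupp.single i 1)) = Φ i
    unfold theta
    rw [Finsupp.linearCombination_single, one_smul]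
  map_add' x y := by
    apply LinearMap.ext
    intro i
    rfl


-- resolution extras
lemma cplx_exactAt (n : ℕ) : (cplx A I).ExactAt (n + 1) := by
  rw [HomologicalComplex.exactAt_iff' _ (n + 2) (n + 1) n (by simp) (by simp)]
  rw [ShortComplex.moduleCat_exact_iff_range_eq_ker]
  show LinearMap.range ((cplx A I).d (n + 2) (n + 1)).hom = LinearMap.ker ((cplx A I).d (n + 1) n).hom
  erw [show (cplx A I).d (n+2) (n+1) = dd A I (n+1) from ChainComplex.of_d (fun n => (tw A I n).1) (dd A I) (n+1), cplx_d,
    range_dd, ker_dd]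

noncomputable def pizero : (cplx A I).X 0 ⟶ ModuleCat.of A (A ⧸ I.asIdeal) :=
  ModuleCat.ofHom (I.asIdeal.mkQ : A →ₗ[A] A ⧸ I.asIdeal)

lemma d_pizero : (cplx A I).d 1 0 ≫ pizero A I = 0 := by
  apply ModuleCat.hom_ext
  apply LinearMap.ext
  intro x
  have h1 : (cplx A I).d 1 0 x ∈ I.asIdeal := by
    have : (cplx A I).d 1 0 x ∈ LinearMap.range (dd A I 0).hom := by
      rw [← cplx_d]; exact ⟨x, rfl⟩
    rwa [range_dd] at this
  show I.asIdeal.mkQ ((cplx A I).d 1 0 x) = 0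
  exact (Submodule.Quotient.mk_eq_zero (M := A) _).2 h1

noncomputable def resol : ProjectiveResolution (ModuleCat.of A (A ⧸ I.asIdeal)) where
  complex := cplx A I
  projective n := by
    cases n with
    | zero =>
      exact (IsProjective.iff_projective _).mp inferInstance
    | succ m =>
      show Projective (ModuleCat.of A (↥(tw A I m).2 →₀ A))
      exact (IsProjective.iff_projective _).mp inferInstance
  π := (ChainComplex.toSingle₀Equiv _ _).symm ⟨pizero A I, d_pizero A I⟩
  quasiIso := ⟨fun n => by
    cases n with
    | zero =>
      rw [ChainComplex.quasiIsoAt₀_iff, ShortComplex.quasiIso_iff_of_zeros']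
      · refine (ShortComplex.exact_and_epi_g_iff_of_iso
          (S₂ := ShortComplex.mk ((cplx A I).d 1 0) (pizero A I) (d_pizero A I))
          (ShortComplex.isoMk (Iso.refl _) (Iso.refl _) (Iso.refl _)
            (by simp) (by simp [ChainComplex.toSingle₀Equiv]))).2 ⟨?_, ?_⟩
        · rw [ShortComplex.moduleCat_exact_iff_range_eq_ker]
          show LinearMap.range ((cplx A I).d 1 0).hom = LinearMap.ker (pizero A I).hom
          erw [cplx_d, range_dd]
          exact (Submodule.ker_mkQ _).symm
        · rw [ModuleCat.epi_iff_surjective]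
          exact Submodule.mkQ_surjective _
      all_goals rfl
    | succ m =>
      rw [quasiIsoAt_iff_exactAt']
      · exact cplx_exactAt A I m
      · apply ChainComplex.exactAt_succ_single_obj⟩





variable {k A I}

/-- `ψ₀` : the underlying `k`-functional of `Φ : I →ₗ[A] NN`. -/
noncomputable def psi0 (Φ : ↥I.asIdeal →ₗ[A] ↥(DBar k A I)) : ↥I.asIdeal →ₗ[k] k where
  toFun i := (Φ i : A →ₗ[k] k) 1
  map_add' i j := by
    show (Φ (i + j) : A →ₗ[k] k) 1 = (Φ i : A →ₗ[k] k) 1 + (Φ j : A →ₗ[k] k) 1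
    rw [map_add]; rfl
  map_smul' c i := by
    show (Φ (c • i) : A →ₗ[k] k) 1 = c • (Φ i : A →ₗ[k] k) 1
    rw [← algebraMap_smul A c i, map_smul]
    show (Φ i : A →ₗ[k] k) (1 * algebraMap k A c) = c • (Φ i : A →ₗ[k] k) 1
    rw [one_mul, Algebra.algebraMap_eq_smul_one, map_smul]

lemma psi0_vanish (Φ : ↥I.asIdeal →ₗ[A] ↥(DBar k A I)) (x : ↥I.asIdeal)
    (hx : (x : A) ∈ Submodule.span A {x : A | ∃ a ∈ I, ∃ b ∈ I, x = a * b}) :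
    psi0 Φ x = 0 := by
  have key : ∀ (y : A), y ∈ Submodule.span A {x : A | ∃ a ∈ I, ∃ b ∈ I, x = a * b} →
      ∃ (h : y ∈ I.asIdeal), ∀ c : A, (Φ ⟨y, h⟩ : A →ₗ[k] k) c = 0 := by
    intro y hy
    induction hy using Submodule.span_induction with
    | mem z hz =>
      obtain ⟨a, ha, b, hb, rfl⟩ := hz
      have hb' : b ∈ I.asIdeal := TwoSidedIdeal.mem_asIdeal.2 hb
      have hmem : a * b ∈ I.asIdeal := TwoSidedIdeal.mem_asIdeal.2 (I.mul_mem_left a b hb)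
      refine ⟨hmem, fun c => ?_⟩
      have : (⟨a * b, hmem⟩ : ↥I.asIdeal) = a • ⟨b, hb'⟩ := Subtype.ext rfl
      rw [this, map_smul]
      show (Φ ⟨b, hb'⟩ : A →ₗ[k] k) (c * a) = 0
      exact (Φ ⟨b, hb'⟩).2 (c * a) (I.mul_mem_left c a ha)
    | zero =>
      refine ⟨Submodule.zero_mem _, fun c => ?_⟩
      have : (⟨(0 : A), Submodule.zero_mem _⟩ : ↥I.asIdeal) = 0 := rfl
      rw [this, map_zero]
      rfl
    | add y z hy hz ihy ihz =>
      obtain ⟨h1, e1⟩ := ihy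
      obtain ⟨h2, e2⟩ := ihz
      refine ⟨Submodule.add_mem _ h1 h2, fun c => ?_⟩
      have : (⟨y + z, Submodule.add_mem _ h1 h2⟩ : ↥I.asIdeal) =
          ⟨y, h1⟩ + ⟨z, h2⟩ := rfl
      rw [this, map_add]
      show (Φ ⟨y, h1⟩ : A →ₗ[k] k) c + (Φ ⟨z, h2⟩ : A →ₗ[k] k) c = 0
      rw [e1 c, e2 c, add_zero]
    | smul a y hy ihy =>
      obtain ⟨h1, e1⟩ := ihy
      refine ⟨Submodule.smul_mem _ a h1, fun c => ?_⟩
      have : (⟨a • y, Submodule.smul_mem _ a h1⟩ : ↥I.asIdeal) = a • ⟨y, h1⟩ := rfl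
      rw [this, map_smul]
      show (Φ ⟨y, h1⟩ : A →ₗ[k] k) (c * a) = 0
      exact e1 (c * a)
  obtain ⟨h, e⟩ := key (x : A) hx
  have : x = ⟨(x : A), h⟩ := Subtype.ext rfl
  show (Φ x : A →ₗ[k] k) 1 = 0
  rw [this]
  exact e 1

/-- Forward map: `Hom_A(I, NN) → D(I/I²)`. -/
lemma sq_le_ker (Φ : ↥I.asIdeal →ₗ[A] ↥(DBar k A I)) :
    (sqInside A I).restrictScalars k ≤ LinearMap.ker (psi0 Φ) :=
  fun x hx => LinearMap.mem_ker.2 (psi0_vanish Φ x hx)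

noncomputable def dualTo (Φ : ↥I.asIdeal →ₗ[A] ↥(DBar k A I)) :
    (↥I.asIdeal ⧸ sqInside A I) →ₗ[k] k :=
  (((sqInside A I).restrictScalars k).liftQ (psi0 Φ) (sq_le_ker Φ)).comp
    ((Submodule.Quotient.restrictScalarsEquiv k (sqInside A I)).symm.toLinearMap)

lemma dualTo_mk (Φ : ↥I.asIdeal →ₗ[A] ↥(DBar k A I)) (y : ↥I.asIdeal) :
    dualTo Φ (Submodule.Quotient.mk y) = (Φ y : A →ₗ[k] k) 1 := by
  have h1 : (Submodule.Quotient.restrictScalarsEquiv k (sqInside A I)).symm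
      (Submodule.Quotient.mk y) = Submodule.Quotient.mk y := by
    apply (Submodule.Quotient.restrictScalarsEquiv k (sqInside A I)).injective
    rw [LinearEquiv.apply_symm_apply, Submodule.Quotient.restrictScalarsEquiv_mk]
  show (((sqInside A I).restrictScalars k).liftQ (psi0 Φ) (sq_le_ker Φ))
      ((Submodule.Quotient.restrictScalarsEquiv k (sqInside A I)).symm
        (Submodule.Quotient.mk y)) = _
  rw [h1, Submodule.liftQ_apply]
  rfl

/-- Backward map ingredient: the functional `x ↦ ψ(x·i mod I²)`. -/
noncomputable def backFun (ψ : (↥I.asIdeal ⧸ sqInside A I) →ₗ[k] k) (i : ↥I.asIdeal) :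
    A →ₗ[k] k where
  toFun x := ψ (Submodule.Quotient.mk
    ⟨x * (i : A), TwoSidedIdeal.mem_asIdeal.2
      (I.mul_mem_left x _ (TwoSidedIdeal.mem_asIdeal.1 i.2))⟩)
  map_add' x y := by
    show ψ (Submodule.Quotient.mk _) = ψ (Submodule.Quotient.mk _) + ψ (Submodule.Quotient.mk _)
    rw [← map_add, ← Submodule.Quotient.mk_add]
    exact congrArg (fun t : ↥I.asIdeal => ψ (Submodule.Quotient.mk t))
      (Subtype.ext (add_mul x y (i : A)))
  map_smul' c x := by
    show ψ (Submodule.Quotient.mk _) = c • ψ (Submodule.Quotient.mk _)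
    rw [← map_smul, ← Submodule.Quotient.mk_smul]
    exact congrArg (fun t : ↥I.asIdeal => ψ (Submodule.Quotient.mk t))
      (Subtype.ext (smul_mul_assoc c x (i : A)))

lemma backFun_mem_DBar (ψ : (↥I.asIdeal ⧸ sqInside A I) →ₗ[k] k) (i : ↥I.asIdeal) :
    backFun ψ i ∈ DBar k A I := by
  intro x hx
  show ψ (Submodule.Quotient.mk _) = 0
  rw [(Submodule.Quotient.mk_eq_zero _).2, map_zero]
  show (⟨x * (i : A), _⟩ : ↥I.asIdeal) ∈ sqInside A I
  show x * (i : A) ∈ Submodule.span A _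
  exact Submodule.subset_span ⟨x, hx, i, TwoSidedIdeal.mem_asIdeal.1 i.2, rfl⟩

/-- Backward map: `D(I/I²) → Hom_A(I, NN)`. -/
noncomputable def dualFrom (ψ : (↥I.asIdeal ⧸ sqInside A I) →ₗ[k] k) :
    ↥I.asIdeal →ₗ[A] ↥(DBar k A I) where
  toFun i := ⟨backFun ψ i, backFun_mem_DBar ψ i⟩
  map_add' i j := by
    apply Subtype.ext
    apply LinearMap.ext
    intro x
    show ψ (Submodule.Quotient.mk _) = ψ (Submodule.Quotient.mk _) + ψ (Submodule.Quotient.mk _)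
    rw [← map_add, ← Submodule.Quotient.mk_add]
    exact congrArg (fun t : ↥I.asIdeal => ψ (Submodule.Quotient.mk t))
      (Subtype.ext (mul_add x (i : A) (j : A)))
  map_smul' a i := by
    apply Subtype.ext
    apply LinearMap.ext
    intro x
    show ψ (Submodule.Quotient.mk _) = ψ (Submodule.Quotient.mk _)
    exact congrArg (fun t : ↥I.asIdeal => ψ (Submodule.Quotient.mk t))
      (Subtype.ext (mul_assoc x a (i : A)).symm)

/-- The additive equivalence `Hom_A(I, NN) ≃+ D(I/I²)`. -/
noncomputable def dualEquiv : (↥I.asIdeal →ₗ[A] ↥(DBar k A I)) ≃+ ((↥I.asIdeal ⧸ sqInside A I) →ₗ[k] k) where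
  toFun := dualTo
  invFun := dualFrom
  left_inv Φ := by
    apply LinearMap.ext
    intro i
    apply Subtype.ext
    apply LinearMap.ext
    intro x
    show dualTo Φ (Submodule.Quotient.mk _) = (Φ i : A →ₗ[k] k) x
    rw [dualTo_mk]
    show (Φ (x • i) : A →ₗ[k] k) 1 = (Φ i : A →ₗ[k] k) x
    rw [map_smul]
    show (Φ i : A →ₗ[k] k) (1 * x) = (Φ i : A →ₗ[k] k) x
    rw [one_mul]
  right_inv ψ := by
    apply LinearMap.ext
    intro z
    obtain ⟨y, rfl⟩ := Submodule.Quotient.mk_surjective _ z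
    rw [dualTo_mk]
    show ψ (Submodule.Quotient.mk _) = ψ (Submodule.Quotient.mk y)
    exact congrArg (fun t : ↥I.asIdeal => ψ (Submodule.Quotient.mk t))
      (Subtype.ext (one_mul (y : A)))
  map_add' Φ₁ Φ₂ := by
    apply LinearMap.ext
    intro z
    obtain ⟨y, rfl⟩ := Submodule.Quotient.mk_surjective _ z
    rw [LinearMap.add_apply, dualTo_mk, dualTo_mk, dualTo_mk]
    rw [LinearMap.add_apply]
    rfl


variable (k A I)

/-- Additive equivalence of carriers underlying an isomorphism in `ModuleCat R`. -/
noncomputable def isoToAddEquiv {R : Type} [Ring R] {X Y : ModuleCat R} (e : X ≅ Y) :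
    ↥X ≃+ ↥Y where
  toFun := e.hom
  invFun := e.inv
  left_inv x := by
    have h := LinearMap.congr_fun (congrArg ModuleCat.Hom.hom e.hom_inv_id) x
    exact h
  right_inv y := by
    have h := LinearMap.congr_fun (congrArg ModuleCat.Hom.hom e.inv_hom_id) y
    exact h
  map_add' := map_add e.hom.hom

/-- The composite additive equivalence `Ext¹(A/I, D(A/I)) ≃+ D(I/I²)`. -/
noncomputable def bigEquiv :
    ↥(((_root_.Ext ℤ (ModuleCat A) 1).obj (Opposite.op (ModuleCat.of A (A ⧸ I.asIdeal)))).obj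
        (NMod A I k)) ≃+ ((↥I.asIdeal ⧸ sqInside A I) →ₗ[k] k) :=
  (isoToAddEquiv ((resol A I).isoExt 1 (NMod A I k))).trans
    ((isoToAddEquiv ((KK A I k).homologyIsoSc' 0 1 2 (by simp) (by simp))).trans
      ((isoToAddEquiv ((SS A I k).moduleCatHomologyIso)).trans
        ((Submodule.quotEquivOfEqBot _ (range_toCycles_bot A I k)).toAddEquiv.trans
          ((kerEquiv A I k).trans dualEquiv))))

end ExtOneProofAux

/-- For a two-sided ideal `I` of an artin algebra `A` over a field `k`,
`Ext¹_A(A/I, D(A/I)) ≅ D(I/I²)`, where `D = Hom_k(-, k)` is the Matlis duality.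
In particular, `Ext¹_A(A/I, D(A/I)) = 0` if and only if `I` is idempotent. -/
theorem ext_one_quotient_dual_iso_dual_sq
    (k A : Type) [Field k] [Ring A] [Algebra k A] [Module.Finite k A]
    (I : TwoSidedIdeal A) :
    Nonempty ((egrp A 1 (A ⧸ I.asIdeal) ↥(DBar k A I)) ≃+
        ((↥(I.asIdeal) ⧸ sqInside A I) →ₗ[k] k)) ∧
      (Subsingleton (egrp A 1 (A ⧸ I.asIdeal) ↥(DBar k A I)) ↔
        Submodule.span A {x : A | ∃ a ∈ I, ∃ b ∈ I, x = a * b} = I.asIdeal) := by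
  constructor
  · exact ⟨ExtOneProofAux.bigEquiv A I k⟩
  · constructor
    · intro hsub
      haveI hsub' : Subsingleton ↥(((_root_.Ext ℤ (ModuleCat A) 1).obj
          (Opposite.op (ModuleCat.of A (A ⧸ I.asIdeal)))).obj (ExtOneProofAux.NMod A I k)) := hsub
      haveI : Subsingleton ((↥I.asIdeal ⧸ sqInside A I) →ₗ[k] k) :=
        (ExtOneProofAux.bigEquiv A I k).symm.toEquiv.subsingleton
      apply le_antisymm
      · rw [Submodule.span_le]
        rintro x ⟨a, ha, b, hb, rfl⟩
        exact SetLike.mem_coe.2 (TwoSidedIdeal.mem_asIdeal.2 (I.mul_mem_left a b hb))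
      · intro x hx
        have hq : (Submodule.Quotient.mk (⟨x, hx⟩ : ↥I.asIdeal) :
            ↥I.asIdeal ⧸ sqInside A I) = 0 := by
          rw [← Module.forall_dual_apply_eq_zero_iff k]
          intro φ
          rw [Subsingleton.elim φ 0]
          rfl
        exact (Submodule.Quotient.mk_eq_zero (sqInside A I)).1 hq
    · intro hspan
      have htop : sqInside A I = ⊤ := by
        rw [eq_top_iff]
        intro y _
        show (y : A) ∈ Submodule.span A _
        rw [hspan]
        exact y.2
      haveI hq : Subsingleton (↥I.asIdeal ⧸ sqInside A I) :=
        Submodule.Quotient.subsingleton_iff.2 htop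
      haveI hD : Subsingleton ((↥I.asIdeal ⧸ sqInside A I) →ₗ[k] k) :=
        ⟨fun f g => LinearMap.ext fun x => by
          rw [Subsingleton.elim x 0, map_zero, map_zero]⟩
      exact (ExtOneProofAux.bigEquiv A I k).toEquiv.subsingleton
end
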